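/- Let g be an m×m unitary monomial matrix, i.e., g e_i = d_i e_{π(i)} for a permutation π of {0,…,m−1} and unit complex numbers d_i. Then for every positive integer n and all ν, ν' ∈ T(m,n), one has [B_n(g)]_{ν',ν} = ∏_i d_i^{ν(i)} if ν' = ν∘π^{−1}, and [B_n(g)]_{ν',ν} = 0 otherwise; equivalently, B_n(g) e_ν = (∏_i d_i^{ν(i)}) e_{ν∘π^{−1}}. In particular, B_n(g) is a unitary monomial matrix. -/

import Mathlib

namespace BSF

variable {α : Type*} [Fintype α] [DecidableEq α]

/-- The canonical list in which each index `i` is repeated `ν i` times. -/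
noncomputable def repList (ν : α → ℕ) : List α :=
  Finset.univ.toList.flatMap fun i => List.replicate (ν i) i

set_option linter.unusedSectionVars false in
lemma repList_length (ν : α → ℕ) : (repList ν).length = ∑ i, ν i := by
  simp [repList, List.length_flatMap]

/-- The index set `T(m,n)`: occupation-number tuples with total `n`. -/
def BosonIdx (α : Type*) [Fintype α] (n : ℕ) := {ν : α → ℕ // ∑ i, ν i = n}

instance {n : ℕ} : DecidableEq (BosonIdx α n) :=
  inferInstanceAs (DecidableEq {ν : α → ℕ // ∑ i, ν i = n})

noncomputable instance {n : ℕ} : Fintype (BosonIdx α n) :=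
  Fintype.ofInjective
    (fun ν : BosonIdx α n => fun i : α =>
      (⟨ν.1 i, by
        have h := Finset.single_le_sum (f := ν.1) (fun j _ => Nat.zero_le _) (Finset.mem_univ i)
        rw [ν.2] at h
        omega⟩ : Fin (n + 1)))
    (fun a b hab => Subtype.ext (funext fun i => congrArg Fin.val (congrFun hab i)))

/-- The permanent of a square complex matrix. -/
noncomputable def permanent {n : ℕ} (M : Matrix (Fin n) (Fin n) ℂ) : ℂ :=
  ∑ σ : Equiv.Perm (Fin n), ∏ i, M (σ i) i

/-- The canonical repetition function associated with an occupation tuple. -/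
noncomputable def repFun {n : ℕ} (ν : BosonIdx α n) : Fin n → α :=
  fun k => (repList ν.1).get (Fin.cast ((repList_length ν.1).trans ν.2).symm k)

/-- The `n`-boson representation of a matrix `S`. -/
noncomputable def bosonRep (n : ℕ) (S : Matrix α α ℂ) :
    Matrix (BosonIdx α n) (BosonIdx α n) ℂ :=
  Matrix.of fun ν ν' =>
    permanent (Matrix.of fun k l => S (repFun ν k) (repFun ν' l)) /
      (Real.sqrt ((∏ i, (ν.1 i).factorial * (ν'.1 i).factorial : ℕ) : ℝ) : ℂ)

/-- Relabeling an occupation tuple by (precomposition with) a permutation of the modes. -/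
def permIdx {n : ℕ} (σ : Equiv.Perm α) (ν : BosonIdx α n) : BosonIdx α n :=
  ⟨ν.1 ∘ σ, show ∑ i, ν.1 (σ i) = n from (Equiv.sum_comp σ ν.1).trans ν.2⟩

/-! ### Auxiliary lemmas -/

lemma card_inst_irrel {T : Type*} (i1 i2 : Fintype T) :
    @Fintype.card T i1 = @Fintype.card T i2 := by
  congr 1
  exact Subsingleton.elim _ _

lemma ite_inst_irrel {P : Prop} (i1 i2 : Decidable P) (a b : ℂ) :
    @ite ℂ P i1 a b = @ite ℂ P i2 a b := by
  congr 1

set_option linter.unusedSectionVars false in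
lemma count_repList (ν : α → ℕ) (i : α) : (repList ν).count i = ν i := by
  rw [repList, List.count_flatMap]
  rw [show ((List.count i ∘ fun j => List.replicate (ν j) j) =
      fun j => if j = i then ν j else 0) from funext fun j => by simp [List.count_replicate]]
  rw [Finset.sum_map_toList Finset.univ (fun j => if j = i then ν j else 0)]
  simp

lemma card_fiber_get (l : List α) (i : α) :
    Fintype.card {k : Fin l.length // l.get k = i} = l.count i := by
  rw [Fintype.card_subtype]
  have := Fin.card_filter_univ_eq_vector_get_eq_count i (⟨l, rfl⟩ : List.Vector α l.length)
  simp [List.Vector.get] at this ⊢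
  convert this using 2
  ext x
  simp
  exact Iff.symm (Finset.mem_filter.trans (and_iff_right (Finset.mem_univ _)))

lemma card_fiber_repFun {n : ℕ} (ν : BosonIdx α n) (i : α) :
    Fintype.card {k : Fin n // repFun ν k = i} = ν.1 i := by
  have h : n = (repList ν.1).length := ((repList_length ν.1).trans ν.2).symm
  rw [← count_repList ν.1 i, ← card_fiber_get (repList ν.1) i]
  exact Fintype.card_congr ((finCongr h).subtypeEquiv fun k => Iff.rfl)

section PermCount

variable {β : Type*} [Fintype β] [DecidableEq β]

set_option linter.unusedSectionVars false in
lemma card_fiber_comp (σ : Equiv.Perm β) (f : β → α) (i : α) :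
    Fintype.card {k // f (σ k) = i} = Fintype.card {k // f k = i} :=
  Fintype.card_congr (σ.subtypeEquiv fun _ => Iff.rfl)

set_option linter.unusedSectionVars false in
lemma card_fiber_eq_of_solution {f h : β → α} (σ : Equiv.Perm β)
    (hσ : ∀ k, f (σ k) = h k) (i : α) :
    Fintype.card {k // f k = i} = Fintype.card {k // h k = i} := by
  rw [← card_fiber_comp σ f i]
  exact Fintype.card_congr (Equiv.subtypeEquivRight fun k => by rw [hσ k])

/-- Permutations preserving the fibers of `h` are products of permutations of the fibers. -/
noncomputable def fiberPermEquiv (h : β → α) :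
    {τ : Equiv.Perm β // ∀ k, h (τ k) = h k} ≃ ∀ i, Equiv.Perm {k // h k = i} where
  toFun := fun τ i => Equiv.Perm.subtypePerm τ.1 (fun k => by rw [τ.2 k])
  invFun := fun F => ⟨(Equiv.sigmaFiberEquiv h).symm.trans
      ((Equiv.sigmaCongrRight F).trans (Equiv.sigmaFiberEquiv h)),
    fun k => (F (h k) ⟨k, rfl⟩).2⟩
  left_inv := fun τ => Subtype.ext (Equiv.ext fun k => rfl)
  right_inv := fun F => funext fun i => Equiv.ext fun k => by
    obtain ⟨k, hk⟩ := k
    subst hk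
    rfl

lemma card_fiberPerm (h : β → α) :
    Fintype.card {τ : Equiv.Perm β // ∀ k, h (τ k) = h k} =
      ∏ i, (Fintype.card {k // h k = i}).factorial := by
  rw [Fintype.card_congr (fiberPermEquiv h), Fintype.card_pi]
  simp [Fintype.card_perm]

lemma card_solutions {f h : β → α} (σ₀ : Equiv.Perm β) (hσ₀ : ∀ k, f (σ₀ k) = h k) :
    Fintype.card {σ : Equiv.Perm β // ∀ k, f (σ k) = h k} =
      ∏ i, (Fintype.card {k // h k = i}).factorial := by
  rw [← card_fiberPerm h]
  refine Fintype.card_congr ?_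
  have key : ∀ x, h (σ₀.symm x) = f x := fun x => by
    rw [← hσ₀ (σ₀.symm x), Equiv.apply_symm_apply]
  exact
    { toFun := fun σ => ⟨σ.1.trans σ₀.symm, fun k => by
        simp only [Equiv.trans_apply]; rw [key, σ.2 k]⟩
      invFun := fun τ => ⟨τ.1.trans σ₀, fun k => by
        simp only [Equiv.trans_apply]; rw [hσ₀, τ.2 k]⟩
      left_inv := fun σ => Subtype.ext (Equiv.ext fun k => by simp)
      right_inv := fun τ => Subtype.ext (Equiv.ext fun k => by simp) }

set_option linter.unusedSectionVars false in
lemma exists_solution {f h : β → α}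
    (hc : ∀ i, Fintype.card {k // f k = i} = Fintype.card {k // h k = i}) :
    ∃ σ₀ : Equiv.Perm β, ∀ k, f (σ₀ k) = h k := by
  have e : ∀ i, {k // h k = i} ≃ {k // f k = i} :=
    fun i => Fintype.equivOfCardEq (hc i).symm
  exact ⟨(Equiv.sigmaFiberEquiv h).symm.trans
      ((Equiv.sigmaCongrRight e).trans (Equiv.sigmaFiberEquiv f)),
    fun k => (e (h k) ⟨k, rfl⟩).2⟩

set_option linter.unusedSectionVars false in
lemma prod_comp_eq_prod_pow (D : α → ℂ) (f : β → α) :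
    ∏ k, D (f k) = ∏ i, D i ^ Fintype.card {k // f k = i} := by
  rw [← Finset.prod_fiberwise Finset.univ f (fun k => D (f k))]
  refine Finset.prod_congr rfl fun i _ => ?_
  rw [Fintype.card_subtype]
  rw [Finset.prod_congr rfl (fun k hk => by rw [(Finset.mem_filter.mp hk).2] :
    ∀ k ∈ Finset.univ.filter (fun k => f k = i), D (f k) = D i)]
  exact Finset.prod_const (D i)

end PermCount

/-- `permIdx` as a permutation of `BosonIdx α n`. -/
def permIdxEquiv {n : ℕ} (σ : Equiv.Perm α) : Equiv.Perm (BosonIdx α n) where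
  toFun := permIdx σ
  invFun := permIdx σ.symm
  left_inv := fun ν => Subtype.ext (funext fun i => by simp [permIdx])
  right_inv := fun ν => Subtype.ext (funext fun i => by simp [permIdx])

/-- The entrywise formula for the boson representation of a monomial matrix. -/
lemma bosonRep_monomial_apply {m n : ℕ}
    (g : Matrix (Fin m) (Fin m) ℂ) (π : Equiv.Perm (Fin m)) (d : Fin m → ℂ)
    (hg : ∀ i j, g j i = if j = π i then d i else 0)
    (ν ν' : BosonIdx (Fin m) n) :
    bosonRep n g ν' ν = if ν' = permIdx π.symm ν then ∏ i, d i ^ ν.1 i else 0 := by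
  set f : Fin n → Fin m := repFun ν' with hfdef
  set r : Fin n → Fin m := repFun ν with hrdef
  have hperm : permanent (Matrix.of fun k l => g (f k) (r l)) =
      (Fintype.card {σ : Equiv.Perm (Fin n) // ∀ l, f (σ l) = π (r l)} : ℂ) *
        ∏ i, d i ^ ν.1 i := by
    rw [permanent]
    have hterm : ∀ σ : Equiv.Perm (Fin n),
        (∏ l, Matrix.of (fun k l => g (f k) (r l)) (σ l) l) =
          if ∀ l, f (σ l) = π (r l) then ∏ l, d (r l) else 0 := by
      intro σ
      rw [show (fun l => Matrix.of (fun k l => g (f k) (r l)) (σ l) l) =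
          fun l => if f (σ l) = π (r l) then d (r l) else 0 from
        funext fun l => hg (r l) (f (σ l))]
      exact (Fintype.prod_ite_zero (p := fun l => f (σ l) = π (r l))
        (f := fun l => d (r l))).trans (ite_inst_irrel _ _ _ _)
    simp_rw [hterm]
    rw [← Finset.sum_filter (fun σ : Equiv.Perm (Fin n) => ∀ l, f (σ l) = π (r l))
      (fun _ => ∏ l, d (r l)), Finset.sum_const, nsmul_eq_mul, Fintype.card_subtype]
    congr 1
    rw [prod_comp_eq_prod_pow d r]
    exact Finset.prod_congr rfl fun i _ => by rw [hrdef, card_fiber_repFun]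
  have hfc : ∀ i, Fintype.card {k : Fin n // f k = i} = ν'.1 i :=
    fun i => card_fiber_repFun ν' i
  have hhc : ∀ i, Fintype.card {k : Fin n // π (r k) = i} = ν.1 (π.symm i) := by
    intro i
    rw [Fintype.card_congr (Equiv.subtypeEquivRight fun k =>
      (π.apply_eq_iff_eq_symm_apply : π (r k) = i ↔ r k = π.symm i))]
    exact card_fiber_repFun ν (π.symm i)
  rw [bosonRep]
  simp only [Matrix.of_apply]
  rw [hperm]
  by_cases hcase : ν' = permIdx π.symm ν
  · have hcnt : ∀ i, Fintype.card {k : Fin n // f k = i} =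
        Fintype.card {k : Fin n // π (r k) = i} := by
      intro i
      rw [hfc, hhc, hcase]
      rfl
    obtain ⟨σ₀, hσ₀⟩ := exists_solution hcnt
    have hN : Fintype.card {σ : Equiv.Perm (Fin n) // ∀ l, f (σ l) = π (r l)} =
        ∏ i, (ν.1 i).factorial := by
      refine (card_inst_irrel _ _).trans ((card_solutions σ₀ hσ₀).trans ?_)
      rw [Finset.prod_congr rfl fun i _ => by rw [hhc i]]
      exact Equiv.prod_comp π.symm fun i => (ν.1 i).factorial
    have hden : (∏ i, (ν'.1 i).factorial * (ν.1 i).factorial) =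
        (∏ i, (ν.1 i).factorial) * ∏ i, (ν.1 i).factorial := by
      rw [Finset.prod_mul_distrib]
      congr 1
      rw [hcase]
      exact Equiv.prod_comp π.symm fun i => (ν.1 i).factorial
    rw [hN, hden, if_pos hcase]
    push_cast
    rw [Real.sqrt_mul_self (by positivity)]
    have hQ : ((∏ i, (ν.1 i).factorial : ℕ) : ℂ) ≠ 0 := by
      rw [Nat.cast_ne_zero]
      exact Finset.prod_ne_zero_iff.mpr fun i _ => (ν.1 i).factorial_ne_zero
    push_cast at hQ ⊢
    rw [mul_comm, mul_div_assoc, div_self hQ, mul_one]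
  · have hN : Fintype.card {σ : Equiv.Perm (Fin n) // ∀ l, f (σ l) = π (r l)} = 0 := by
      rw [Fintype.card_eq_zero_iff]
      refine ⟨fun σ => hcase ?_⟩
      obtain ⟨σ, hσ⟩ := σ
      refine Subtype.ext (funext fun i => ?_)
      have := card_fiber_eq_of_solution σ hσ i
      rw [hfc, hhc] at this
      exact this
    rw [hN, if_neg hcase]
    simp

set_option linter.unusedSectionVars false in
/-- The `n`-boson representation of a unitary monomial matrix
`g e_i = d_i e_{π i}` has entries `[B_n(g)]_{ν',ν} = ∏ i, d i ^ ν i` if `ν' = ν ∘ π⁻¹`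
and `0` otherwise; equivalently `B_n(g) e_ν = (∏ i, d i ^ ν i) e_{ν ∘ π⁻¹}`.
In particular `B_n(g)` is again a unitary monomial matrix. -/
theorem bosonRep_of_monomial {m n : ℕ} (hn : 0 < n)
    (g : Matrix (Fin m) (Fin m) ℂ) (π : Equiv.Perm (Fin m)) (d : Fin m → ℂ)
    (hd : ∀ i, ‖d i‖ = 1)
    (hg : ∀ i j, g j i = if j = π i then d i else 0) :
    (∀ ν ν' : BosonIdx (Fin m) n,
      bosonRep n g ν' ν = if ν' = permIdx π.symm ν then ∏ i, d i ^ ν.1 i else 0) ∧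
    (∀ ν : BosonIdx (Fin m) n,
      (bosonRep n g).mulVec (Pi.single ν 1) =
        (∏ i, d i ^ ν.1 i) • (Pi.single (permIdx π.symm ν) (1 : ℂ) : BosonIdx (Fin m) n → ℂ)) ∧
    (bosonRep n g ∈ Matrix.unitaryGroup (BosonIdx (Fin m) n) ℂ ∧
      ∃ (Sig : Equiv.Perm (BosonIdx (Fin m) n)) (D : BosonIdx (Fin m) n → ℂ),
        (∀ ν, ‖D ν‖ = 1) ∧
        ∀ ν ν' : BosonIdx (Fin m) n,
          bosonRep n g ν' ν = if ν' = Sig ν then D ν else 0) := by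
  have part1 : ∀ ν ν' : BosonIdx (Fin m) n,
      bosonRep n g ν' ν = if ν' = permIdx π.symm ν then ∏ i, d i ^ ν.1 i else 0 :=
    fun ν ν' => bosonRep_monomial_apply g π d hg ν ν'
  have hD1 : ∀ ν : BosonIdx (Fin m) n, ‖∏ i, d i ^ ν.1 i‖ = 1 := by
    intro ν
    rw [norm_prod]
    simp [map_pow, hd]
  refine ⟨part1, ?_, ?_, ?_⟩
  · intro ν
    funext μ
    rw [Matrix.mulVec_single]
    show bosonRep n g μ ν * 1 = _
    rw [part1 ν μ]
    simp only [Pi.smul_apply, Pi.single_apply, smul_eq_mul, mul_one]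
    split_ifs <;> simp
  · rw [Matrix.mem_unitaryGroup_iff']
    ext a b
    rw [Matrix.mul_apply, Matrix.one_apply]
    simp_rw [Matrix.star_apply, part1]
    rw [Finset.sum_eq_single (permIdx π.symm a)
      (fun k _ hk => by rw [if_neg hk, star_zero, zero_mul])
      (fun h => absurd (Finset.mem_univ _) h)]
    rw [if_pos rfl]
    by_cases hab : a = b
    · subst hab
      rw [if_pos rfl]
      rw [Complex.star_def, mul_comm, Complex.mul_conj, Complex.normSq_eq_norm_sq, hD1 a]
      norm_num
    · have : permIdx π.symm a ≠ permIdx π.symm b := by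
        intro h
        exact hab ((permIdxEquiv (n := n) π.symm).injective h)
      rw [if_neg this, mul_zero, if_neg hab]
  · refine ⟨permIdxEquiv π.symm, fun ν => ∏ i, d i ^ ν.1 i, hD1, fun ν ν' => part1 ν ν'⟩

end BSF
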